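/- Let n ≥ 0 and let Φ_n* be the subgroup of R_n(G) generated by x* = (x, t_x) and y* = (y, t_y), where G is the multiplicative group (ℤ_n)² with generators x, y. Then the commutator subgroup of Φ_n* is exactly {(1, (1−y)p·t_x − (1−x)p·t_y) : p ∈ ℤ_n[G]}, where 1−x and 1−y are computed in the group ring ℤ_n[G]. -/

import Mathlib

/-- The group `R_n(G)` of pairs `(g,t)` with `g ∈ G` and `t` in the free left
`ℤ_n[G]`-module with basis indexed by `ι`, with multiplication
`(g,t)(h,s) = (gh, g·s+t)` (the semidirect product `T_n ⋊ G`).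
Here `ℤ_n = ZMod n`, so `ℤ_0 = ℤ`. -/
@[ext]
structure MagnusGroup (n : ℕ) (G : Type*) [Group G] (ι : Type*) where
  fst : G
  snd : ι → MonoidAlgebra (ZMod n) G

namespace MagnusGroup

variable {n : ℕ} {G : Type*} [Group G] {ι : Type*}

noncomputable instance : Mul (MagnusGroup n G ι) :=
  ⟨fun a b => ⟨a.fst * b.fst, fun i => MonoidAlgebra.of (ZMod n) G a.fst * b.snd i + a.snd i⟩⟩

noncomputable instance : One (MagnusGroup n G ι) := ⟨⟨1, 0⟩⟩

noncomputable instance : Inv (MagnusGroup n G ι) :=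
  ⟨fun a => ⟨a.fst⁻¹, fun i => -(MonoidAlgebra.of (ZMod n) G a.fst⁻¹ * a.snd i)⟩⟩

@[simp] lemma mul_fst (a b : MagnusGroup n G ι) : (a * b).fst = a.fst * b.fst := rfl
@[simp] lemma mul_snd (a b : MagnusGroup n G ι) (i : ι) :
    (a * b).snd i = MonoidAlgebra.of (ZMod n) G a.fst * b.snd i + a.snd i := rfl
@[simp] lemma one_fst : (1 : MagnusGroup n G ι).fst = 1 := rfl
@[simp] lemma one_snd (i : ι) : (1 : MagnusGroup n G ι).snd i = 0 := rfl
@[simp] lemma inv_fst (a : MagnusGroup n G ι) : (a⁻¹).fst = a.fst⁻¹ := rfl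
@[simp] lemma inv_snd (a : MagnusGroup n G ι) (i : ι) :
    (a⁻¹).snd i = -(MonoidAlgebra.of (ZMod n) G a.fst⁻¹ * a.snd i) := rfl

noncomputable instance : Group (MagnusGroup n G ι) where
  mul_assoc a b c :=
    MagnusGroup.ext (mul_assoc _ _ _)
      (funext fun i => by simp only [mul_fst, mul_snd, map_mul, mul_add, mul_assoc, add_assoc])
  one_mul a :=
    MagnusGroup.ext (one_mul _)
      (funext fun i => by simp only [mul_fst, mul_snd, one_fst, one_snd, map_one, one_mul,
        add_zero, zero_add])
  mul_one a :=
    MagnusGroup.ext (mul_one _)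
      (funext fun i => by simp only [mul_fst, mul_snd, one_fst, one_snd, mul_zero, zero_add])
  inv_mul_cancel a :=
    MagnusGroup.ext (inv_mul_cancel _)
      (funext fun i => by simp only [mul_fst, mul_snd, inv_fst, inv_snd, one_snd,
        add_neg_cancel, neg_add_cancel])

end MagnusGroup

/-- The subgroup `Φ_n* ≤ R_n(G)` generated by `x* = (x, t_x)` and `y* = (y, t_y)`, where
`G = (ℤ_n)²` with generators `x, y` (written multiplicatively). -/
noncomputable def PhiStar (n : ℕ) : Subgroup (MagnusGroup n (Multiplicative (ZMod n × ZMod n)) (Fin 2)) :=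
  Subgroup.closure
    {⟨Multiplicative.ofAdd ((1 : ZMod n), (0 : ZMod n)), Pi.single 0 1⟩,
     ⟨Multiplicative.ofAdd ((0 : ZMod n), (1 : ZMod n)), Pi.single 1 1⟩}

namespace MagnusAux

open scoped commutatorElement

variable (n : ℕ)

abbrev Gn (n : ℕ) := Multiplicative (ZMod n × ZMod n)
abbrev An (n : ℕ) := MonoidAlgebra (ZMod n) (Gn n)
abbrev Rn (n : ℕ) := MagnusGroup n (Gn n) (Fin 2)

def Xg : Gn n := Multiplicative.ofAdd ((1 : ZMod n), (0 : ZMod n))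
def Yg : Gn n := Multiplicative.ofAdd ((0 : ZMod n), (1 : ZMod n))

noncomputable abbrev og : Gn n →* An n := MonoidAlgebra.of (ZMod n) (Gn n)

noncomputable def xs : Rn n := ⟨Xg n, Pi.single 0 1⟩
noncomputable def ys : Rn n := ⟨Yg n, Pi.single 1 1⟩

noncomputable def zee (p : An n) : Rn n :=
  ⟨1, ![(1 - og n (Yg n)) * p, -((1 - og n (Xg n)) * p)]⟩

lemma zee_zero : zee n 0 = 1 :=
  MagnusGroup.ext rfl (funext fun i => by fin_cases i <;> simp [zee])

lemma zee_mul (p q : An n) : zee n p * zee n q = zee n (p + q) :=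
  MagnusGroup.ext (one_mul 1) (funext fun i => by
    fin_cases i <;>
      simp only [zee, MagnusGroup.mul_snd, map_one, one_mul, Matrix.cons_val_zero,
        Matrix.cons_val_one, Matrix.head_cons, Fin.zero_eta, Fin.mk_one] <;> ring)

noncomputable def zeeHom : Multiplicative (An n) →* Rn n where
  toFun p := zee n p.toAdd
  map_one' := zee_zero n
  map_mul' p q := (zee_mul n p.toAdd q.toAdd).symm

lemma zee_zsmul (m : ℤ) (p : An n) : zee n (m • p) = zee n p ^ m := by
  have h := map_zpow (zeeHom n) (Multiplicative.ofAdd p) m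
  simpa [zeeHom, toAdd_zpow] using h

/-- The "Fox derivative" subgroup. -/
noncomputable def der : Subgroup (Rn n) where
  carrier := {a | (og n (Xg n) - 1) * a.snd 0 + (og n (Yg n) - 1) * a.snd 1
      = og n a.fst - 1}
  one_mem' := by
    show (og n (Xg n) - 1) * 0 + (og n (Yg n) - 1) * 0 = og n 1 - 1
    rw [mul_zero, mul_zero, add_zero, map_one, sub_self]
  mul_mem' := by
    intro a b ha hb
    have ha' : (og n (Xg n) - 1) * a.snd 0 + (og n (Yg n) - 1) * a.snd 1
        = og n a.fst - 1 := ha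
    have hb' : (og n (Xg n) - 1) * b.snd 0 + (og n (Yg n) - 1) * b.snd 1
        = og n b.fst - 1 := hb
    show (og n (Xg n) - 1) * ((a * b).snd 0) + (og n (Yg n) - 1) * ((a * b).snd 1)
        = og n ((a * b).fst) - 1
    simp only [MagnusGroup.mul_snd, MagnusGroup.mul_fst, map_mul]
    linear_combination (og n a.fst) * hb' + ha'
  inv_mem' := by
    intro a ha
    have ha' : (og n (Xg n) - 1) * a.snd 0 + (og n (Yg n) - 1) * a.snd 1
        = og n a.fst - 1 := ha
    have h1 : og n a.fst⁻¹ * og n a.fst = 1 := by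
      rw [← map_mul, inv_mul_cancel, map_one]
    show (og n (Xg n) - 1) * ((a⁻¹).snd 0) + (og n (Yg n) - 1) * ((a⁻¹).snd 1)
        = og n ((a⁻¹).fst) - 1
    simp only [MagnusGroup.inv_snd, MagnusGroup.inv_fst]
    linear_combination (-(og n a.fst⁻¹)) * ha' - h1

lemma phi_le_der : PhiStar n ≤ der n := by
  rw [PhiStar, Subgroup.closure_le]
  rintro a (rfl | rfl) <;>
  · show (og n (Xg n) - 1) * _ + (og n (Yg n) - 1) * _ = _ - 1
    simp [og, Xg, Yg, Pi.single_apply]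

lemma commutator_eq (a b : Rn n) (ha : a ∈ der n) (hb : b ∈ der n) :
    ⁅a, b⁆ = zee n (a.snd 0 * b.snd 1 - a.snd 1 * b.snd 0) := by
  have ha' : (og n (Xg n) - 1) * a.snd 0 + (og n (Yg n) - 1) * a.snd 1
      = og n a.fst - 1 := ha
  have hb' : (og n (Xg n) - 1) * b.snd 0 + (og n (Yg n) - 1) * b.snd 1
      = og n b.fst - 1 := hb
  rw [commutatorElement_def, mul_inv_eq_iff_eq_mul, mul_inv_eq_iff_eq_mul]
  refine MagnusGroup.ext ?_ (funext fun i => ?_)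
  · show a.fst * b.fst = (1 : Gn n) * b.fst * a.fst
    rw [one_mul, mul_comm]
  · fin_cases i <;>
      simp only [MagnusGroup.mul_snd, MagnusGroup.mul_fst, zee, map_one, one_mul, map_mul,
        Matrix.cons_val_zero, Matrix.cons_val_one, Matrix.head_cons, Fin.zero_eta, Fin.mk_one]
    · linear_combination a.snd 0 * hb' - b.snd 0 * ha'
    · linear_combination a.snd 1 * hb' - b.snd 1 * ha'

noncomputable def NN : Subgroup (Rn n) where
  carrier := {z | ∃ p, z = zee n p}
  one_mem' := ⟨0, (zee_zero n).symm⟩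
  mul_mem' := by rintro a b ⟨p, rfl⟩ ⟨q, rfl⟩; exact ⟨p + q, zee_mul n p q⟩
  inv_mem' := by
    rintro a ⟨p, rfl⟩
    refine ⟨-p, ?_⟩
    rw [eq_comm, eq_inv_iff_mul_eq_one, zee_mul, neg_add_cancel, zee_zero]

noncomputable def fstHom : Rn n →* Gn n where
  toFun := MagnusGroup.fst
  map_one' := rfl
  map_mul' _ _ := rfl

lemma exists_fst (g : Gn n) : ∃ c ∈ PhiStar n, c.fst = g := by
  have htop : Subgroup.closure ({Xg n, Yg n} : Set (Gn n)) = ⊤ := by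
    rw [Subgroup.eq_top_iff']
    intro g
    obtain ⟨m1, hm1⟩ := ZMod.intCast_surjective (g.toAdd.1)
    obtain ⟨m2, hm2⟩ := ZMod.intCast_surjective (g.toAdd.2)
    have hg : g = Xg n ^ m1 * Yg n ^ m2 := by
      apply Multiplicative.toAdd.injective
      simp only [toAdd_mul, toAdd_zpow, Xg, Yg, toAdd_ofAdd, Prod.smul_mk, Prod.mk_add_mk,
        smul_zero, zsmul_eq_mul, mul_one, add_zero, zero_add]
      rw [hm1, hm2]
    rw [hg]
    exact mul_mem (zpow_mem (Subgroup.subset_closure (by simp)) _)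
      (zpow_mem (Subgroup.subset_closure (by simp)) _)
  have hg : g ∈ Subgroup.map (fstHom n) (PhiStar n) := by
    rw [PhiStar, MonoidHom.map_closure, Set.image_pair]
    show g ∈ Subgroup.closure ({Xg n, Yg n} : Set (Gn n))
    rw [htop]; trivial
  obtain ⟨c, hc, hcfst⟩ := hg
  exact ⟨c, hc, hcfst⟩

lemma conj_zee (c : Rn n) (p : An n) : c * zee n p * c⁻¹ = zee n (og n c.fst * p) := by
  have h1 : og n c.fst * og n c.fst⁻¹ = 1 := by
    rw [← map_mul, mul_inv_cancel, map_one]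
  refine MagnusGroup.ext ?_ (funext fun i => ?_)
  · show c.fst * (1 : Gn n) * c.fst⁻¹ = 1
    rw [mul_one, mul_inv_cancel]
  · fin_cases i <;>
      simp only [MagnusGroup.mul_snd, MagnusGroup.mul_fst, MagnusGroup.inv_snd,
        MagnusGroup.inv_fst, zee, map_mul, map_one, mul_one, Matrix.cons_val_zero,
        Matrix.cons_val_one, Matrix.head_cons, Fin.zero_eta, Fin.mk_one]
    · linear_combination (-(c.snd 0)) * h1
    · linear_combination (-(c.snd 1)) * h1

lemma xs_mem_der : xs n ∈ der n := by
  show (og n (Xg n) - 1) * _ + (og n (Yg n) - 1) * _ = _ - 1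
  simp [xs, Pi.single_apply]

lemma ys_mem_der : ys n ∈ der n := by
  show (og n (Xg n) - 1) * _ + (og n (Yg n) - 1) * _ = _ - 1
  simp [ys, Pi.single_apply]

lemma xs_mem_phi : xs n ∈ PhiStar n :=
  Subgroup.subset_closure (Set.mem_insert _ _)

lemma ys_mem_phi : ys n ∈ PhiStar n :=
  Subgroup.subset_closure (Set.mem_insert_iff.2 (Or.inr rfl))

lemma base_comm : ⁅xs n, ys n⁆ = zee n 1 := by
  rw [commutator_eq n _ _ (xs_mem_der n) (ys_mem_der n)]
  congr 1
  simp [xs, ys, Pi.single_apply]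

lemma of_mem (g : Gn n) : zee n (og n g) ∈ ⁅PhiStar n, PhiStar n⁆ := by
  obtain ⟨c, hc, hcfst⟩ := exists_fst n g
  have h2 : zee n (og n g) = c * ⁅xs n, ys n⁆ * c⁻¹ := by
    rw [base_comm, conj_zee, hcfst, mul_one]
  have h3 : c * ⁅xs n, ys n⁆ * c⁻¹ = ⁅c * xs n * c⁻¹, c * ys n * c⁻¹⁆ := by
    have := map_commutatorElement (MulAut.conj c) (xs n) (ys n)
    simpa only [MulAut.conj_apply] using this
  rw [h2, h3]
  exact Subgroup.commutator_mem_commutator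
    (mul_mem (mul_mem hc (xs_mem_phi n)) (inv_mem hc))
    (mul_mem (mul_mem hc (ys_mem_phi n)) (inv_mem hc))

lemma zee_mem (p : An n) : zee n p ∈ ⁅PhiStar n, PhiStar n⁆ := by
  induction p using MonoidAlgebra.induction_on with
  | of g => exact of_mem n g
  | add p q hp hq => rw [← zee_mul]; exact mul_mem hp hq
  | smul r f hf =>
      obtain ⟨m, hm⟩ := ZMod.intCast_surjective r
      rw [← hm, Int.cast_smul_eq_zsmul, zee_zsmul]
      exact zpow_mem hf m

end MagnusAux

/-- The commutator subgroup of `Φ_n*` consists exactly of the elements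
`(1, (1−y)p·t_x − (1−x)p·t_y)` with `p ∈ ℤ_n[G]`. -/
theorem commutator_PhiStar (n : ℕ)
    (z : MagnusGroup n (Multiplicative (ZMod n × ZMod n)) (Fin 2)) :
    z ∈ ⁅PhiStar n, PhiStar n⁆ ↔
      ∃ p : MonoidAlgebra (ZMod n) (Multiplicative (ZMod n × ZMod n)),
        z = ⟨1,
          ![(1 - MonoidAlgebra.of (ZMod n) (Multiplicative (ZMod n × ZMod n))
              (Multiplicative.ofAdd ((0 : ZMod n), (1 : ZMod n)))) * p,
            -((1 - MonoidAlgebra.of (ZMod n) (Multiplicative (ZMod n × ZMod n))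
              (Multiplicative.ofAdd ((1 : ZMod n), (0 : ZMod n)))) * p)]⟩ := by
  
  constructor
  · intro hz
    have hle : ⁅PhiStar n, PhiStar n⁆ ≤ MagnusAux.NN n :=
      Subgroup.commutator_le.mpr fun a ha b hb =>
        ⟨_, MagnusAux.commutator_eq n a b (MagnusAux.phi_le_der n ha)
          (MagnusAux.phi_le_der n hb)⟩
    obtain ⟨p, hp⟩ := hle hz
    exact ⟨p, hp⟩
  · rintro ⟨p, rfl⟩
    exact MagnusAux.zee_mem n p
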